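/- Let n be a positive integer and i, k ∈ {1,...,n}. Let H ~ Hyp(n,i,k) and X ~ Bin(k, i/n), and assume that (1) i·k/n ∈ (m−1, m] for some integer m ∈ {2,3,...,min{i,k}−2}, and (2) (n−i)(n−k)/n > 1. Then P(H = m) / P(X = m) ≥ (e^{−1/8}/2) · √( i(n−i)(n−k) / ((i−m)(n−i−k+m)·n) ). -/

import Mathlib

set_option maxHeartbeats 1000000

/-- The probability mass function of the hypergeometric distribution `Hyp(n,i,k)`. -/
noncomputable def hypPMF (n i k j : ℕ) : ℝ :=
  ((Nat.choose i j : ℝ) * (Nat.choose (n - i) (k - j) : ℝ)) / (Nat.choose n k : ℝ)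

/-- The probability mass function of the binomial distribution `Bin(k,p)`. -/
noncomputable def binPMF (k : ℕ) (p : ℝ) (j : ℕ) : ℝ :=
  (Nat.choose k j : ℝ) * p ^ j * (1 - p) ^ (k - j)

open Real Finset

namespace HypBin



lemma taylor_base {x : ℝ} (h0 : 0 ≤ x) (h1 : x ≤ 1/2) :
    |(x + x^2/2 + x^3/3 + x^4/4 + x^5/5 + x^6/6) + Real.log (1-x)| ≤ 2*x^7 := by
  have habs : |x| < 1 := by rw [abs_of_nonneg h0]; linarith
  have h := Real.abs_log_sub_add_sum_range_le habs 6
  have hsum : (∑ i ∈ range 6, x ^ (i+1) / ((i:ℝ)+1))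
      = x + x^2/2 + x^3/3 + x^4/4 + x^5/5 + x^6/6 := by
    simp [Finset.sum_range_succ]
    norm_num
    try ring
  rw [hsum] at h
  refine h.trans ?_
  rw [abs_of_nonneg h0]
  rw [div_le_iff₀ (by linarith)]
  norm_num
  nlinarith [pow_nonneg h0 7, pow_nonneg h0 8]

lemma log_one_sub_ub {x : ℝ} (h0 : 0 ≤ x) (h1 : x ≤ 1/2) :
    Real.log (1-x) ≤ -(x + x^2/2 + x^3/3 + x^4/4 + x^5/5 + x^6/6) + 2*x^7 := by
  have := abs_le.mp (taylor_base h0 h1)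
  linarith [this.2]

lemma log_one_sub_lb {x : ℝ} (h0 : 0 ≤ x) (h1 : x ≤ 1/2) :
    -(x + x^2/2 + x^3/3 + x^4/4 + x^5/5 + x^6/6) - 2*x^7 ≤ Real.log (1-x) := by
  have := abs_le.mp (taylor_base h0 h1)
  linarith [this.1]

lemma taylor_base' {x : ℝ} (h0 : 0 ≤ x) (h1 : x ≤ 1/2) :
    |(-x + x^2/2 - x^3/3 + x^4/4 - x^5/5 + x^6/6) + Real.log (1+x)| ≤ 2*x^7 := by
  have habs : |(-x)| < 1 := by rw [abs_neg, abs_of_nonneg h0]; linarith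
  have h := Real.abs_log_sub_add_sum_range_le habs 6
  have hsum : (∑ i ∈ range 6, (-x) ^ (i+1) / ((i:ℝ)+1))
      = -x + x^2/2 - x^3/3 + x^4/4 - x^5/5 + x^6/6 := by
    simp [Finset.sum_range_succ]
    norm_num
    try ring
  rw [hsum] at h
  have h2 : (1 : ℝ) - (-x) = 1 + x := by ring
  rw [h2] at h
  refine h.trans ?_
  rw [abs_neg, abs_of_nonneg h0]
  rw [div_le_iff₀ (by linarith)]
  norm_num
  nlinarith [pow_nonneg h0 7, pow_nonneg h0 8]

lemma log_one_add_ub {x : ℝ} (h0 : 0 ≤ x) (h1 : x ≤ 1/2) :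
    Real.log (1+x) ≤ x - x^2/2 + x^3/3 - x^4/4 + x^5/5 - x^6/6 + 2*x^7 := by
  have := abs_le.mp (taylor_base' h0 h1)
  linarith [this.2]

lemma log_one_add_lb {x : ℝ} (h0 : 0 ≤ x) (h1 : x ≤ 1/2) :
    x - x^2/2 + x^3/3 - x^4/4 + x^5/5 - x^6/6 - 2*x^7 ≤ Real.log (1+x) := by
  have := abs_le.mp (taylor_base' h0 h1)
  linarith [this.1]


lemma coreA {s : ℝ} (h0 : 0 < s) (h1 : s ≤ 1/3) :
    (1+s)*Real.log (1+s) - (1-s)*Real.log (1-s) ≤ 2*s := by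
  have hub := log_one_add_ub h0.le (by linarith)
  have hlb := log_one_sub_lb h0.le (by linarith)
  have c1 : (1+s)*Real.log (1+s)
      ≤ (1+s)*(s - s^2/2 + s^3/3 - s^4/4 + s^5/5 - s^6/6 + 2*s^7) :=
    mul_le_mul_of_nonneg_left hub (by linarith)
  have c2 : -((1-s)*Real.log (1-s))
      ≤ (1-s)*((s + s^2/2 + s^3/3 + s^4/4 + s^5/5 + s^6/6) + 2*s^7) := by
    nlinarith [mul_le_mul_of_nonneg_left hlb (show (0:ℝ) ≤ 1 - s by linarith)]
  have h2 : s^2 ≤ 1/9 := by nlinarith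
  have h4 : s^4 ≤ 1/81 := by nlinarith
  have h7 : s^7 ≤ s^3 * (1/81) := by nlinarith [pow_nonneg h0.le 3]
  have expand : (1+s)*(s - s^2/2 + s^3/3 - s^4/4 + s^5/5 - s^6/6 + 2*s^7)
      + (1-s)*((s + s^2/2 + s^3/3 + s^4/4 + s^5/5 + s^6/6) + 2*s^7)
      = 2*s - s^3/3 - s^5/10 + (11/3)*s^7 := by ring
  nlinarith [pow_nonneg h0.le 5, pow_nonneg h0.le 3]

lemma coreB {s : ℝ} (h0 : 0 < s) (h1 : s ≤ 1/3) :
    2*s ≤ Real.log (1+s) - Real.log (1-s) := by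
  have hub := log_one_sub_ub h0.le (by linarith)
  have hlb := log_one_add_lb h0.le (by linarith)
  have h2 : s^2 ≤ 1/9 := by nlinarith
  have h4 : s^4 ≤ 1/81 := by nlinarith
  have h7 : s^7 ≤ s^3 * (1/81) := by nlinarith [pow_nonneg h0.le 3]
  nlinarith [pow_nonneg h0.le 5, pow_nonneg h0.le 3]

/-- midpoint lemma -/
lemma lem_M {y : ℝ} (hy : 3/2 ≤ y) :
    (y+1/2)*Real.log (y+1/2) - (y-1/2)*Real.log (y-1/2) ≤ Real.log y + 1 := by
  have hy0 : 0 < y := by linarith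
  have hs0 : 0 < 1/(2*y) := by positivity
  set s : ℝ := 1/(2*y) with hs_def
  have hsy : 2*s*y = 1 := by rw [hs_def]; field_simp
  have hs1 : s ≤ 1/3 := by rw [hs_def, div_le_div_iff₀ (by linarith) (by norm_num)]; linarith
  have h1s : (0:ℝ) < 1 + s := by linarith
  have h2s : (0:ℝ) < 1 - s := by nlinarith
  have e1 : y + 1/2 = y*(1+s) := by linear_combination (-1/2 : ℝ) * hsy
  have e2 : y - 1/2 = y*(1-s) := by linear_combination (1/2 : ℝ) * hsy
  have l1 : Real.log (y+1/2) = Real.log y + Real.log (1+s) := by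
    rw [e1, Real.log_mul (ne_of_gt hy0) (ne_of_gt h1s)]
  have l2 : Real.log (y-1/2) = Real.log y + Real.log (1-s) := by
    rw [e2, Real.log_mul (ne_of_gt hy0) (ne_of_gt h2s)]
  have hA := coreA hs0 hs1
  have t1 : 2*s*((y+1/2)*Real.log (1+s) - (y-1/2)*Real.log (1-s))
      = (1+s)*Real.log (1+s) - (1-s)*Real.log (1-s) := by
    linear_combination (Real.log (1+s) - Real.log (1-s)) * hsy
  have t2 : 2*s*((y+1/2)*Real.log (1+s) - (y-1/2)*Real.log (1-s)) ≤ 2*s*1 := by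
    rw [t1]; linarith
  have t3 : (y+1/2)*Real.log (1+s) - (y-1/2)*Real.log (1-s) ≤ 1 :=
    le_of_mul_le_mul_left (by linarith [t2]) (by linarith : (0:ℝ) < 2*s)
  rw [l1, l2]
  nlinarith [t3]

/-- trapezoid lemma -/
lemma lem_T {z : ℝ} (hz : 3/2 ≤ z) :
    Real.log (z+1/2) / 2 + Real.log (z-1/2) / 2 + 1
      ≤ (z+1/2) * Real.log (z+1/2) - (z-1/2)*Real.log (z-1/2) := by
  have hz0 : 0 < z := by linarith
  have hs0 : 0 < 1/(2*z) := by positivity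
  set s : ℝ := 1/(2*z) with hs_def
  have hsz : 2*s*z = 1 := by rw [hs_def]; field_simp
  have hs1 : s ≤ 1/3 := by rw [hs_def, div_le_div_iff₀ (by linarith) (by norm_num)]; linarith
  have h1s : (0:ℝ) < 1 + s := by linarith
  have h2s : (0:ℝ) < 1 - s := by nlinarith
  have e1 : z + 1/2 = z*(1+s) := by linear_combination (-1/2 : ℝ) * hsz
  have e2 : z - 1/2 = z*(1-s) := by linear_combination (1/2 : ℝ) * hsz
  have l1 : Real.log (z+1/2) = Real.log z + Real.log (1+s) := by
    rw [e1, Real.log_mul (ne_of_gt hz0) (ne_of_gt h1s)]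
  have l2 : Real.log (z-1/2) = Real.log z + Real.log (1-s) := by
    rw [e2, Real.log_mul (ne_of_gt hz0) (ne_of_gt h2s)]
  have hB := coreB hs0 hs1
  have t1 : z*(Real.log (1+s) - Real.log (1-s)) ≥ z*(2*s) :=
    mul_le_mul_of_nonneg_left hB hz0.le
  have t2 : z*(2*s) = 1 := by linear_combination hsz
  rw [l1, l2]
  nlinarith [t1, t2]



lemma lem_half {x : ℝ} (hx : 0 < x) :
    1/2 ≤ (x+1/2) * (Real.log (x+1/2) - Real.log x) := by
  have h1 : Real.log (x+1/2) - Real.log x = Real.log ((x+1/2)/x) := by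
    rw [Real.log_div (by positivity) (ne_of_gt hx)]
  rw [h1]
  have h2 := Real.one_sub_inv_le_log_of_pos (show (0:ℝ) < (x+1/2)/x by positivity)
  have h3 : ((x+1/2)/x)⁻¹ = x/(x+1/2) := by
    rw [inv_div]
  rw [h3] at h2
  have h4 : 1 - x/(x+1/2) = (1/2)/(x+1/2) := by field_simp; ring
  rw [h4] at h2
  have h5 : (x+1/2) * ((1/2)/(x+1/2)) = 1/2 := by field_simp; try ring
  nlinarith [mul_le_mul_of_nonneg_left h2 (show (0:ℝ) ≤ x+1/2 by linarith)]

lemma lem_D {u v t : ℝ} (hu : 2 ≤ u) (hv : 2 ≤ v) (ht0 : 0 ≤ t) (ht1 : t ≤ 1) :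
    v*(Real.log v - Real.log (v-t)) - u*(Real.log (u+t) - Real.log u)
      ≤ v*(Real.log v - Real.log (v-1)) - u*(Real.log (u+1) - Real.log u) := by
  -- reduces to u*(log(u+1) - log(u+t)) ≤ v*(log(v-t) - log(v-1))
  have hvt : (0:ℝ) < v - t := by linarith
  have hv1 : (0:ℝ) < v - 1 := by linarith
  have hut : (0:ℝ) < u + t := by linarith
  have h1 : Real.log (v-t) - Real.log (v-1) = Real.log ((v-t)/(v-1)) := by
    rw [Real.log_div (ne_of_gt hvt) (ne_of_gt hv1)]
  have h2 : Real.log (u+1) - Real.log (u+t) = Real.log ((u+1)/(u+t)) := by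
    rw [Real.log_div (by positivity) (ne_of_gt hut)]
  have lb := Real.one_sub_inv_le_log_of_pos (show (0:ℝ) < (v-t)/(v-1) by positivity)
  have ub := Real.log_le_sub_one_of_pos (show (0:ℝ) < (u+1)/(u+t) by positivity)
  have e1 : ((v-t)/(v-1))⁻¹ = (v-1)/(v-t) := by rw [inv_div]
  rw [e1] at lb
  -- v*(1 - (v-1)/(v-t)) = v*(1-t)/(v-t) ≥ 1-t
  have k1 : 1 - t ≤ v*(1 - (v-1)/(v-t)) := by
    have e : v*(1 - (v-1)/(v-t)) = v*(1-t)/(v-t) := by field_simp; try ring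
    rw [e, le_div_iff₀ hvt]
    nlinarith
  have k2 : u*((u+1)/(u+t) - 1) ≤ 1 - t := by
    have e : u*((u+1)/(u+t) - 1) = u*(1-t)/(u+t) := by field_simp; try ring
    rw [e, div_le_iff₀ hut]
    nlinarith
  have c1 : u * Real.log ((u+1)/(u+t)) ≤ u * ((u+1)/(u+t) - 1) :=
    mul_le_mul_of_nonneg_left ub (by linarith)
  have c2 : v * (1 - (v-1)/(v-t)) ≤ v * Real.log ((v-t)/(v-1)) :=
    mul_le_mul_of_nonneg_left lb (by linarith)
  have g1 : u*(Real.log (u+1) - Real.log (u+t)) ≤ v*(Real.log (v-t) - Real.log (v-1)) := by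
    rw [h1, h2]; linarith
  linarith


lemma polyP {a : ℝ} (h0 : 0 ≤ a) (h1 : a ≤ 1/2) :
    -1/2 + 5/8*a - 17/48*a^2 + 49/192*a^3 - 129/640*a^4 + 107/640*a^5 + 1547/768*a^6 + 1/128*a^7
      ≤ -27031/122880 := by
  have hR : 0 ≤ 34409/61440 - 3991/30720*a + 6889/15360*a^2 + 2969/7680*a^3
      + 4517/3840*a^4 + 775/384*a^5 + 1/128*a^6 := by
    nlinarith [sq_nonneg a, pow_nonneg h0 3, pow_nonneg h0 4, pow_nonneg h0 5, pow_nonneg h0 6]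
  nlinarith [mul_nonneg (by linarith : (0:ℝ) ≤ 1/2 - a) hR]

lemma polyQ {b : ℝ} (h0 : 0 ≤ b) (h1 : b ≤ 1/2) :
    3/2 + 5/8*b + 5/16*b^2 + 49/192*b^3 + 127/640*b^4 + 107/640*b^5 + 1547/768*b^6 + 1/128*b^7
      ≤ 242281/122880 := by
  have hR : 0 ≤ 57961/61440 + 19561/30720*b + 9961/15360*b^2 + 6041/7680*b^3
      + 4517/3840*b^4 + 775/384*b^5 + 1/128*b^6 := by
    nlinarith [sq_nonneg b, pow_nonneg h0 3, pow_nonneg h0 4, pow_nonneg h0 5, pow_nonneg h0 6]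
  nlinarith [mul_nonneg (by linarith : (0:ℝ) ≤ 1/2 - b) hR]

lemma lem_NUM_ab {a b : ℝ} (ha0 : 0 < a) (ha1 : a ≤ 1/2) (hb0 : 0 < b) (hb1 : b ≤ 1/2) :
    (1/b)*(-Real.log (1-b)) - (1/a)*Real.log (1+a)
      + (1/a+1/2)*Real.log (1+a/2) + (1/b+1/2)*Real.log (1+b/2) ≤ 9/8 + Real.log 2 := by
  have c1 : (1/b)*(-Real.log (1-b))
      ≤ (1/b)*((b + b^2/2 + b^3/3 + b^4/4 + b^5/5 + b^6/6) + 2*b^7) := by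
    have := log_one_sub_lb hb0.le hb1
    have h := mul_le_mul_of_nonneg_left (neg_le_neg this) (by positivity : (0:ℝ) ≤ 1/b)
    calc (1/b)*(-Real.log (1-b)) ≤ (1/b)*(-(-(b + b^2/2 + b^3/3 + b^4/4 + b^5/5 + b^6/6) - 2*b^7)) := h
    _ = (1/b)*((b + b^2/2 + b^3/3 + b^4/4 + b^5/5 + b^6/6) + 2*b^7) := by ring
  have c2 : -((1/a)*Real.log (1+a))
      ≤ (1/a)*(-(a - a^2/2 + a^3/3 - a^4/4 + a^5/5 - a^6/6 - 2*a^7)) := by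
    have := log_one_add_lb ha0.le ha1
    have h := mul_le_mul_of_nonneg_left (neg_le_neg this) (by positivity : (0:ℝ) ≤ 1/a)
    linarith [h]
  have ha2 : (0:ℝ) ≤ a/2 := by linarith
  have ha2' : a/2 ≤ 1/2 := by linarith
  have hb2 : (0:ℝ) ≤ b/2 := by linarith
  have hb2' : b/2 ≤ 1/2 := by linarith
  have c3 : (1/a+1/2)*Real.log (1+a/2)
      ≤ (1/a+1/2)*((a/2) - (a/2)^2/2 + (a/2)^3/3 - (a/2)^4/4 + (a/2)^5/5 - (a/2)^6/6 + 2*(a/2)^7) :=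
    mul_le_mul_of_nonneg_left (log_one_add_ub ha2 ha2') (by positivity)
  have c4 : (1/b+1/2)*Real.log (1+b/2)
      ≤ (1/b+1/2)*((b/2) - (b/2)^2/2 + (b/2)^3/3 - (b/2)^4/4 + (b/2)^5/5 - (b/2)^6/6 + 2*(b/2)^7) :=
    mul_le_mul_of_nonneg_left (log_one_add_ub hb2 hb2') (by positivity)
  have eqP : (1/a)*(-(a - a^2/2 + a^3/3 - a^4/4 + a^5/5 - a^6/6 - 2*a^7))
      + (1/a+1/2)*((a/2) - (a/2)^2/2 + (a/2)^3/3 - (a/2)^4/4 + (a/2)^5/5 - (a/2)^6/6 + 2*(a/2)^7)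
      = -1/2 + 5/8*a - 17/48*a^2 + 49/192*a^3 - 129/640*a^4 + 107/640*a^5 + 1547/768*a^6 + 1/128*a^7 := by
    field_simp
    ring
  have eqQ : (1/b)*((b + b^2/2 + b^3/3 + b^4/4 + b^5/5 + b^6/6) + 2*b^7)
      + (1/b+1/2)*((b/2) - (b/2)^2/2 + (b/2)^3/3 - (b/2)^4/4 + (b/2)^5/5 - (b/2)^6/6 + 2*(b/2)^7)
      = 3/2 + 5/8*b + 5/16*b^2 + 49/192*b^3 + 127/640*b^4 + 107/640*b^5 + 1547/768*b^6 + 1/128*b^7 := by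
    field_simp
    ring
  have hP := polyP ha0.le ha1
  have hQ := polyQ hb0.le hb1
  have hlog2 : (0.6931471803 : ℝ) < Real.log 2 := Real.log_two_gt_d9
  linarith [c1, c2, c3, c4, eqP, eqQ, hP, hQ, hlog2]

lemma lem_NUM {u v : ℝ} (hu : 2 ≤ u) (hv : 2 ≤ v) :
    v*(Real.log v - Real.log (v-1)) - u*(Real.log (u+1) - Real.log u)
      + (u+1/2)*(Real.log (u+1/2) - Real.log u) + (v+1/2)*(Real.log (v+1/2) - Real.log v)
      ≤ 9/8 + Real.log 2 := by
  have hu0 : (0:ℝ) < u := by linarith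
  have hv0 : (0:ℝ) < v := by linarith
  have ha0 : 0 < 1/u := by positivity
  have hb0 : 0 < 1/v := by positivity
  have ha1 : 1/u ≤ 1/2 := by rw [div_le_div_iff₀ hu0 (by norm_num)]; linarith
  have hb1 : 1/v ≤ 1/2 := by rw [div_le_div_iff₀ hv0 (by norm_num)]; linarith
  have hb' : (0:ℝ) < 1 - 1/v := by linarith
  have ha' : (0:ℝ) < 1 + 1/u := by linarith
  have ha2' : (0:ℝ) < 1 + (1/u)/2 := by linarith
  have hb2' : (0:ℝ) < 1 + (1/v)/2 := by linarith
  have l1 : Real.log (v-1) = Real.log v + Real.log (1-1/v) := by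
    rw [← Real.log_mul (ne_of_gt hv0) (ne_of_gt hb')]
    congr 1; field_simp
  have l2 : Real.log (u+1) = Real.log u + Real.log (1+1/u) := by
    rw [← Real.log_mul (ne_of_gt hu0) (ne_of_gt ha')]
    congr 1; field_simp
  have l3 : Real.log (u+1/2) = Real.log u + Real.log (1+(1/u)/2) := by
    rw [← Real.log_mul (ne_of_gt hu0) (ne_of_gt ha2')]
    congr 1; field_simp
  have l4 : Real.log (v+1/2) = Real.log v + Real.log (1+(1/v)/2) := by
    rw [← Real.log_mul (ne_of_gt hv0) (ne_of_gt hb2')]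
    congr 1; field_simp
  have key := lem_NUM_ab ha0 ha1 hb0 hb1
  have eu : 1/(1/u) = u := by field_simp
  have ev : 1/(1/v) = v := by field_simp
  rw [eu, ev] at key
  rw [l1, l2, l3, l4]
  linarith [key]


/-- lower bound for the midpoint-sum: `a` real, `c` count. -/
lemma sum_mid_lb (a : ℝ) (c : ℕ) (hc : 3/2 + (c:ℝ) ≤ a) (ha : 0 < a) :
    (a - c + 1/2)*(Real.log a - Real.log (a - c + 1/2)) - c + 1/2
      ≤ ∑ j ∈ range c, (Real.log (a - j) - Real.log a) := by
  set G : ℕ → ℝ := fun j => -(a - j + 1/2)*(Real.log (a - j + 1/2) - Real.log a) - j with hG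
  have tele : ∑ j ∈ range c, (G (j+1) - G j) = G c - G 0 := Finset.sum_range_sub G c
  have step : ∀ j ∈ range c, G (j+1) - G j ≤ Real.log (a - j) - Real.log a := by
    intro j hj
    have hjc : (j:ℝ) ≤ (c:ℝ) - 1 := by
      have := mem_range.mp hj
      have : (j:ℝ) + 1 ≤ (c:ℝ) := by exact_mod_cast Nat.succ_le_of_lt this
      linarith
    have hy : 3/2 ≤ a - j := by linarith
    have hM := lem_M hy
    simp only [hG]
    push_cast
    have e1 : a - ((j:ℝ)+1) + 1/2 = (a - j) - 1/2 := by ring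
    rw [e1]
    nlinarith [hM]
  have hle := Finset.sum_le_sum step
  rw [tele] at hle
  have eG0 : G 0 = -(a + 1/2)*(Real.log (a + 1/2) - Real.log a) := by
    simp only [hG]; norm_num
  have eGc : G c = -(a - c + 1/2)*(Real.log (a - c + 1/2) - Real.log a) - c := by
    simp only [hG]
  have hhalf := lem_half ha
  have final : (a - c + 1/2)*(Real.log a - Real.log (a - c + 1/2)) - c + 1/2 ≤ G c - G 0 := by
    rw [eGc, eG0]; nlinarith [hhalf]
  exact final.trans hle

/-- upper bound for the trapezoid-sum. -/
lemma sum_trap_ub (a : ℝ) (c : ℕ) (hc : 1 + (c:ℝ) ≤ a) :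
    ∑ j ∈ range c, (Real.log (a - j) - Real.log a)
      ≤ -(a - c + 1/2)*(Real.log (a - c) - Real.log a) - c := by
  set H : ℕ → ℝ := fun j =>
    -(a - j)*(Real.log (a - j) - Real.log a) - j - (1/2)*(Real.log (a - j) - Real.log a) with hH
  have tele : ∑ j ∈ range c, (H (j+1) - H j) = H c - H 0 := Finset.sum_range_sub H c
  have step : ∀ j ∈ range c, Real.log (a - j) - Real.log a ≤ H (j+1) - H j := by
    intro j hj
    have hjc : (j:ℝ) ≤ (c:ℝ) - 1 := by
      have h' := mem_range.mp hj
      have : (j:ℝ) + 1 ≤ (c:ℝ) := by exact_mod_cast Nat.succ_le_of_lt h'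
      linarith
    have hz : 3/2 ≤ a - j - 1/2 := by linarith
    have hT := lem_T hz
    have e1 : a - (j:ℝ) - 1/2 + 1/2 = a - j := by ring
    have e2 : a - (j:ℝ) - 1/2 - 1/2 = a - ((j:ℝ)+1) := by ring
    rw [e1, e2] at hT
    simp only [hH]
    push_cast
    nlinarith [hT]
  have hle := Finset.sum_le_sum step
  rw [tele] at hle
  have eH0 : H 0 = 0 := by simp only [hH]; norm_num
  have eHc : H c = -(a - c)*(Real.log (a - c) - Real.log a) - c
      - (1/2)*(Real.log (a - c) - Real.log a) := by simp only [hH]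
  have final : H c - H 0 ≤ -(a - c + 1/2)*(Real.log (a - c) - Real.log a) - c := by
    rw [eHc, eH0]; nlinarith []
  exact hle.trans final


lemma cast_prod_sub (a c : ℕ) (h : c ≤ a) :
    ((a.descFactorial c : ℕ) : ℝ) = ∏ j ∈ range c, ((a:ℝ) - j) := by
  rw [Nat.descFactorial_eq_prod_range, Nat.cast_prod]
  apply prod_congr rfl
  intro j hj
  have hj' : j < c := mem_range.mp hj
  rw [Nat.cast_sub (by omega)]

lemma ratio_eq (n i k m : ℕ) (hi0 : 0 < i) (him : m ≤ i) (hin : i < n) (hmk : m ≤ k) (hkn : k < n)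
    (hikn : i + k ≤ n + m) :
    hypPMF n i k m / binPMF k ((i:ℝ)/n) m
      = (∏ j ∈ range m, (((i:ℝ) - j)/i)) * (∏ j ∈ range (k-m), (((n:ℝ) - i - j)/((n:ℝ)-i)))
        / (∏ j ∈ range k, (((n:ℝ) - j)/n)) := by
  have hn0 : 0 < n := by omega
  have hN : (0:ℝ) < n := by exact_mod_cast hn0
  have hI : (0:ℝ) < i := by
    have : 0 < i := by omega
    exact_mod_cast this
  have hNI : (0:ℝ) < (n:ℝ) - i := by
    have : (i:ℝ) < n := by exact_mod_cast hin
    linarith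
  have hcastni : ((n - i : ℕ) : ℝ) = (n:ℝ) - i := by
    rw [Nat.cast_sub (by omega)]
  -- product rewrites
  have p1 : ∏ j ∈ range m, (((i:ℝ) - j)/i) = (i.descFactorial m : ℝ) / (i:ℝ)^m := by
    rw [prod_div_distrib, prod_const, card_range, cast_prod_sub i m him]
  have p2 : ∏ j ∈ range (k-m), (((n:ℝ) - i - j)/((n:ℝ)-i))
      = ((n-i).descFactorial (k-m) : ℝ) / ((n:ℝ)-i)^(k-m) := by
    rw [prod_div_distrib, prod_const, card_range, cast_prod_sub (n-i) (k-m) (by omega)]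
    congr 1
    apply prod_congr rfl
    intro j hj
    rw [hcastni]
  have p3 : ∏ j ∈ range k, (((n:ℝ) - j)/n) = (n.descFactorial k : ℝ) / (n:ℝ)^k := by
    rw [prod_div_distrib, prod_const, card_range, cast_prod_sub n k (by omega)]
  -- factorial relations
  have f1 : ((Nat.factorial (i-m) : ℕ) : ℝ) * (i.descFactorial m : ℝ) = ((Nat.factorial i : ℕ) : ℝ) := by
    exact_mod_cast congrArg (Nat.cast (R := ℝ)) (Nat.factorial_mul_descFactorial him)
  have f2 : ((Nat.factorial ((n-i)-(k-m)) : ℕ) : ℝ) * ((n-i).descFactorial (k-m) : ℝ) = ((Nat.factorial (n-i) : ℕ) : ℝ) := by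
    exact_mod_cast congrArg (Nat.cast (R := ℝ)) (Nat.factorial_mul_descFactorial (show k-m ≤ n-i by omega))
  have f3 : ((Nat.factorial (n-k) : ℕ) : ℝ) * (n.descFactorial k : ℝ) = ((Nat.factorial n : ℕ) : ℝ) := by
    exact_mod_cast congrArg (Nat.cast (R := ℝ)) (Nat.factorial_mul_descFactorial (show k ≤ n by omega))
  -- choose casts
  have c1 : ((i.choose m : ℕ) : ℝ) = (Nat.factorial i : ℝ)/((Nat.factorial m : ℝ) * (Nat.factorial (i-m) : ℝ)) := Nat.cast_choose ℝ him
  have c2 : (((n-i).choose (k-m) : ℕ) : ℝ)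
      = (Nat.factorial (n-i) : ℝ)/((Nat.factorial (k-m) : ℝ) * (Nat.factorial ((n-i)-(k-m)) : ℝ)) := Nat.cast_choose ℝ (by omega)
  have c3 : ((n.choose k : ℕ) : ℝ) = (Nat.factorial n : ℝ)/((Nat.factorial k : ℝ) * (Nat.factorial (n-k) : ℝ)) := Nat.cast_choose ℝ (by omega)
  have c4 : ((k.choose m : ℕ) : ℝ) = (Nat.factorial k : ℝ)/((Nat.factorial m : ℝ) * (Nat.factorial (k-m) : ℝ)) := Nat.cast_choose ℝ hmk
  have hp : 1 - (i:ℝ)/n = ((n:ℝ) - i)/n := by field_simp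
  have hksplit : (n:ℝ)^k = (n:ℝ)^m * (n:ℝ)^(k-m) := by
    rw [← pow_add]; congr 1; omega
  -- nonzero facts
  have hfm : ((Nat.factorial m : ℕ) : ℝ) ≠ 0 := by exact_mod_cast (Nat.factorial_ne_zero m)
  have hfim : ((Nat.factorial (i-m) : ℕ) : ℝ) ≠ 0 := by exact_mod_cast (Nat.factorial_ne_zero _)
  have hfkm : ((Nat.factorial (k-m) : ℕ) : ℝ) ≠ 0 := by exact_mod_cast (Nat.factorial_ne_zero _)
  have hfv : ((Nat.factorial ((n-i)-(k-m)) : ℕ) : ℝ) ≠ 0 := by exact_mod_cast (Nat.factorial_ne_zero _)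
  have hfk : ((Nat.factorial k : ℕ) : ℝ) ≠ 0 := by exact_mod_cast (Nat.factorial_ne_zero _)
  have hfnk : ((Nat.factorial (n-k) : ℕ) : ℝ) ≠ 0 := by exact_mod_cast (Nat.factorial_ne_zero _)
  have hfn : ((Nat.factorial n : ℕ) : ℝ) ≠ 0 := by exact_mod_cast (Nat.factorial_ne_zero _)
  have hfi : ((Nat.factorial i : ℕ) : ℝ) ≠ 0 := by exact_mod_cast (Nat.factorial_ne_zero _)
  have hfni : ((Nat.factorial (n-i) : ℕ) : ℝ) ≠ 0 := by exact_mod_cast (Nat.factorial_ne_zero _)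
  have hD1 : (i.descFactorial m : ℝ) ≠ 0 := by
    intro h0; rw [h0, mul_zero] at f1; exact hfi f1.symm
  have hD2 : ((n-i).descFactorial (k-m) : ℝ) ≠ 0 := by
    intro h0; rw [h0, mul_zero] at f2; exact hfni f2.symm
  have hD3 : (n.descFactorial k : ℝ) ≠ 0 := by
    intro h0; rw [h0, mul_zero] at f3; exact hfn f3.symm
  unfold hypPMF binPMF
  rw [p1, p2, p3, c1, c2, c3, c4, hp, hksplit]
  rw [div_pow, div_pow]
  rw [← f1, ← f2, ← f3]
  field_simp

end HypBin

open HypBin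



/-- Let `H ~ Hyp(n,i,k)` and `X ~ Bin(k, i/n)`. If `i·k/n ∈ (m−1, m]` for some integer
`m ∈ {2,…,min{i,k}−2}` and `(n−i)(n−k)/n > 1`, then
`P(H = m)/P(X = m) ≥ (e^{−1/8}/2) · √(i(n−i)(n−k) / ((i−m)(n−i−k+m)·n))`. -/
theorem hyp_bin_pmf_ratio (n i k m : ℕ) (hn : 0 < n)
    (hi1 : 1 ≤ i) (hi2 : i ≤ n) (hk1 : 1 ≤ k) (hk2 : k ≤ n)
    (hm1 : 2 ≤ m) (hm2 : m + 2 ≤ min i k)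
    (hmean1 : (m : ℝ) - 1 < (i : ℝ) * k / n)
    (hmean2 : (i : ℝ) * k / n ≤ (m : ℝ))
    (hcond : 1 < ((n : ℝ) - i) * ((n : ℝ) - k) / n) :
    Real.exp (-1/8) / 2 *
        Real.sqrt ((i : ℝ) * ((n : ℝ) - i) * ((n : ℝ) - k) /
          ((((i : ℝ) - m) * ((n : ℝ) - i - k + m)) * n))
      ≤ hypPMF n i k m / binPMF k ((i : ℝ) / n) m := by
  have hmi2 : m + 2 ≤ i := le_trans hm2 (min_le_left _ _)
  have hmk2 : m + 2 ≤ k := le_trans hm2 (min_le_right _ _)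
  have hN : (0:ℝ) < n := by exact_mod_cast hn
  have hI : (0:ℝ) < i := by exact_mod_cast hi1
  have hK : (0:ℝ) < k := by exact_mod_cast hk1
  have hIN : (i:ℝ) ≤ n := by exact_mod_cast hi2
  have hKN : (k:ℝ) ≤ n := by exact_mod_cast hk2
  -- positivity of N - I and N - K
  have hcond' : (n:ℝ) < ((n:ℝ) - i) * ((n:ℝ) - k) := (one_lt_div hN).mp hcond
  have hNI : (0:ℝ) < (n:ℝ) - i := by
    by_contra hcontra; push_neg at hcontra
    nlinarith [mul_nonneg (neg_nonneg.mpr hcontra) (sub_nonneg.mpr hKN)]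
  have hNK : (0:ℝ) < (n:ℝ) - k := by
    by_contra hcontra; push_neg at hcontra
    nlinarith [mul_nonneg (sub_nonneg.mpr hIN) (neg_nonneg.mpr hcontra)]
  have hin : i < n := by exact_mod_cast (by linarith : (i:ℝ) < n)
  have hkn : k < n := by exact_mod_cast (by linarith : (k:ℝ) < n)
  have hU2 : (2:ℝ) ≤ (i:ℝ) - m := by
    have : ((m+2 : ℕ):ℝ) ≤ (i:ℝ) := by exact_mod_cast hmi2
    push_cast at this; linarith
  have hKM2 : (2:ℝ) ≤ (k:ℝ) - m := by
    have : ((m+2 : ℕ):ℝ) ≤ (k:ℝ) := by exact_mod_cast hmk2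
    push_cast at this; linarith
  have ht0 : 0 ≤ (m:ℝ) - (i:ℝ)*k/n := by linarith
  have ht1 : (m:ℝ) - (i:ℝ)*k/n ≤ 1 := by linarith
  -- V > 1 and then V ≥ 2
  have hVsplit : (n:ℝ) - i - k + m = ((n:ℝ)-i)*((n:ℝ)-k)/n + ((m:ℝ) - (i:ℝ)*k/n) := by
    field_simp; ring
  have hV1 : (1:ℝ) < (n:ℝ) - i - k + m := by rw [hVsplit]; linarith
  have hikn : i + k + 2 ≤ n + m := by
    have h' : (i:ℝ) + k + 1 < (n:ℝ) + m := by linarith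
    have h'' : i + k + 1 < n + m := by exact_mod_cast h'
    omega
  have hV2 : (2:ℝ) ≤ (n:ℝ) - i - k + m := by
    have : ((i + k + 2 : ℕ) : ℝ) ≤ ((n + m : ℕ) : ℝ) := by exact_mod_cast hikn
    push_cast at this; linarith
  have hW1 : (1:ℝ) ≤ (n:ℝ) - k := by
    have : ((k+1 : ℕ):ℝ) ≤ (n:ℝ) := by exact_mod_cast hkn
    push_cast at this; linarith
  have hkmcast : ((k - m : ℕ) : ℝ) = (k:ℝ) - m := by
    rw [Nat.cast_sub (by omega)]
  -- rewrite the ratio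
  rw [ratio_eq n i k m (by omega) (by omega) hin (by omega) hkn (by omega)]
  -- convert products to exponentials
  have hprod1 : ∏ j ∈ range m, (((i:ℝ) - j)/i)
      = Real.exp (∑ j ∈ range m, (Real.log ((i:ℝ) - j) - Real.log i)) := by
    rw [Real.exp_sum]
    apply prod_congr rfl
    intro j hj
    have hj' : (j:ℝ) ≤ (m:ℝ) - 1 := by
      have := mem_range.mp hj
      have : (j:ℝ) + 1 ≤ (m:ℝ) := by exact_mod_cast Nat.succ_le_of_lt this
      linarith
    have h1 : 0 < (i:ℝ) - j := by linarith
    rw [← Real.log_div (ne_of_gt h1) (ne_of_gt hI), Real.exp_log (by positivity)]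
  have hprod2 : ∏ j ∈ range (k-m), (((n:ℝ) - i - j)/((n:ℝ)-i))
      = Real.exp (∑ j ∈ range (k-m), (Real.log ((n:ℝ) - i - j) - Real.log ((n:ℝ)-i))) := by
    rw [Real.exp_sum]
    apply prod_congr rfl
    intro j hj
    have hj' : (j:ℝ) ≤ (k:ℝ) - m - 1 := by
      have h'' := mem_range.mp hj
      have : (j:ℝ) + 1 ≤ ((k - m : ℕ):ℝ) := by exact_mod_cast Nat.succ_le_of_lt h''
      rw [hkmcast] at this; linarith
    have h1 : 0 < (n:ℝ) - i - j := by linarith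
    rw [← Real.log_div (ne_of_gt h1) (ne_of_gt hNI), Real.exp_log (by positivity)]
  have hprod3 : ∏ j ∈ range k, (((n:ℝ) - j)/n)
      = Real.exp (∑ j ∈ range k, (Real.log ((n:ℝ) - j) - Real.log n)) := by
    rw [Real.exp_sum]
    apply prod_congr rfl
    intro j hj
    have hj' : (j:ℝ) ≤ (k:ℝ) - 1 := by
      have h'' := mem_range.mp hj
      have : (j:ℝ) + 1 ≤ (k:ℝ) := by exact_mod_cast Nat.succ_le_of_lt h''
      linarith
    have h1 : 0 < (n:ℝ) - j := by linarith
    rw [← Real.log_div (ne_of_gt h1) (ne_of_gt hN), Real.exp_log (by positivity)]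
  rw [hprod1, hprod2, hprod3, ← Real.exp_add, ← Real.exp_sub]
  -- rewrite lhs as an exponential
  have hUpos : (0:ℝ) < (i:ℝ) - m := by linarith
  have hVpos : (0:ℝ) < (n:ℝ) - i - k + m := by linarith
  have harg : (0:ℝ) < (i:ℝ) * ((n:ℝ) - i) * ((n:ℝ) - k) /
      ((((i:ℝ) - m) * ((n:ℝ) - i - k + m)) * n) := by positivity
  have hsqrt : Real.sqrt ((i:ℝ) * ((n:ℝ) - i) * ((n:ℝ) - k) /
      ((((i:ℝ) - m) * ((n:ℝ) - i - k + m)) * n))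
      = Real.exp (Real.log ((i:ℝ) * ((n:ℝ) - i) * ((n:ℝ) - k) /
        ((((i:ℝ) - m) * ((n:ℝ) - i - k + m)) * n)) * (1/2)) := by
    rw [Real.sqrt_eq_rpow, Real.rpow_def_of_pos harg]
  have hhalf2 : Real.exp (-1/8) / 2 = Real.exp (-1/8 - Real.log 2) := by
    rw [Real.exp_sub, Real.exp_log (by norm_num : (0:ℝ) < 2)]
  rw [hsqrt, hhalf2, ← Real.exp_add]
  apply Real.exp_le_exp.mpr
  -- expand log of the argument
  have hlogarg : Real.log ((i:ℝ) * ((n:ℝ) - i) * ((n:ℝ) - k) /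
        ((((i:ℝ) - m) * ((n:ℝ) - i - k + m)) * n))
      = Real.log i + Real.log ((n:ℝ)-i) + Real.log ((n:ℝ)-k)
        - (Real.log ((i:ℝ)-m) + Real.log ((n:ℝ)-i-k+m) + Real.log n) := by
    rw [Real.log_div (by positivity) (by positivity), Real.log_mul (by positivity) (by positivity),
      Real.log_mul (by positivity) (by positivity), Real.log_mul (by positivity) (by positivity),
      Real.log_mul (by positivity) (by positivity)]
    try ring
  rw [hlogarg]
  -- the three sum estimates
  have hS1 := sum_mid_lb (i:ℝ) m (by linarith) hI
  have hS2 := sum_mid_lb ((n:ℝ)-i) (k-m) (by rw [hkmcast]; linarith) hNI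
  rw [hkmcast] at hS2
  have e2a : (n:ℝ) - i - ((k:ℝ)-m) + 1/2 = (n:ℝ) - i - k + m + 1/2 := by ring
  rw [e2a] at hS2
  have hS3 := sum_trap_ub (n:ℝ) k (by linarith)
  -- main analytic estimates
  have hNUM := lem_NUM (u := (i:ℝ)-m) (v := (n:ℝ)-i-k+m) hU2 hV2
  have hD := lem_D (u := (i:ℝ)-m) (v := (n:ℝ)-i-k+m) (t := (m:ℝ) - (i:ℝ)*k/n) hU2 hV2 ht0 ht1
  have idu : Real.log ((i:ℝ)-m + ((m:ℝ) - (i:ℝ)*k/n))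
      = Real.log i + Real.log ((n:ℝ)-k) - Real.log n := by
    have e : (i:ℝ)-m + ((m:ℝ) - (i:ℝ)*k/n) = (i:ℝ)*((n:ℝ)-k)/n := by field_simp; ring
    rw [e, Real.log_div (by positivity) (by positivity), Real.log_mul (by positivity) (by positivity)]
  have idv : Real.log ((n:ℝ)-i-k+m - ((m:ℝ) - (i:ℝ)*k/n))
      = Real.log ((n:ℝ)-i) + Real.log ((n:ℝ)-k) - Real.log n := by
    have e : (n:ℝ)-i-k+m - ((m:ℝ) - (i:ℝ)*k/n) = ((n:ℝ)-i)*((n:ℝ)-k)/n := by field_simp; ring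
    rw [e, Real.log_div (by positivity) (by positivity), Real.log_mul (by positivity) (by positivity)]
  have idu' : ((i:ℝ)-m)*Real.log ((i:ℝ)-m + ((m:ℝ) - (i:ℝ)*k/n))
      = ((i:ℝ)-m)*Real.log i + ((i:ℝ)-m)*Real.log ((n:ℝ)-k) - ((i:ℝ)-m)*Real.log n := by
    rw [idu]; ring
  have idv' : ((n:ℝ)-i-k+m)*Real.log ((n:ℝ)-i-k+m - ((m:ℝ) - (i:ℝ)*k/n))
      = ((n:ℝ)-i-k+m)*Real.log ((n:ℝ)-i) + ((n:ℝ)-i-k+m)*Real.log ((n:ℝ)-k)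
        - ((n:ℝ)-i-k+m)*Real.log n := by
    rw [idv]; ring
  linarith [hS1, hS2, hS3, hNUM, hD, idu', idv']
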